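/- Let K be an infinite perfectly normal compact Hausdorff space. Then the unit sphere of C(K) contains a (1+)-separated subset of cardinality equal to the density character of C(K); that is, there exists a set A of norm-one functions in C(K) with |A| = d(C(K)) and ‖f − g‖ > 1 for all distinct f, g ∈ A. Moreover, if K has no isolated points, then such a set A can be chosen to consist of locally sign-changing functions. -/

import Mathlib

open Cardinal

/-- The density character of a topological space: the least cardinality of a
dense subset. -/
noncomputable def densityCharacter (X : Type*) [TopologicalSpace X] : Cardinal :=
  sInf { c : Cardinal | ∃ s : Set X, Dense s ∧ #s = c }

/-- A continuous real-valued function on `K` is locally sign-changing if at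
every non-isolated point `z` with `f z = 0`, the function takes both strictly
positive and strictly negative values in every open neighbourhood of `z`. -/
def LocallySignChanging {K : Type*} [TopologicalSpace K] (f : C(K, ℝ)) : Prop :=
  ∀ z : K, ¬ IsOpen ({z} : Set K) → f z = 0 →
    ∀ U : Set K, IsOpen U → z ∈ U →
      (∃ t ∈ U, 0 < f t) ∧ (∃ t ∈ U, f t < 0)

set_option maxHeartbeats 1000000

open Set

section Aux

lemma densityCharacter_le {X : Type*} [TopologicalSpace X] (s : Set X) (hs : Dense s) :
    densityCharacter X ≤ #s :=
  csInf_le (OrderBot.bddBelow _) ⟨s, hs, rfl⟩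

variable {K : Type*} [TopologicalSpace K] [CompactSpace K] [T2Space K]

lemma exists_exact_zero (hpn : ∀ F : Set K, IsClosed F → IsGδ F)
    (F : Set K) (hF : IsClosed F) :
    ∃ u : C(K, ℝ), (∀ z, u z ∈ Set.Icc (0:ℝ) 1) ∧ (∀ z, u z = 0 ↔ z ∈ F) := by
  obtain ⟨T, hTopen, hTc, hTF⟩ := hpn F hF
  rcases T.eq_empty_or_nonempty with rfl | hTne
  · refine ⟨0, fun z => ⟨le_refl _ |>.trans (le_refl 0), zero_le_one⟩, fun z => ?_⟩
    simp [hTF]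
  obtain ⟨V, hV⟩ := Set.Countable.exists_eq_range hTc hTne
  have hVopen : ∀ n, IsOpen (V n) := fun n => hTopen _ (hV ▸ Set.mem_range_self n)
  have hFV : F = ⋂ n, V n := by rw [hTF, hV, Set.sInter_range]
  have hdisj : ∀ n : ℕ, Disjoint F (V n)ᶜ := fun n => by
    rw [Set.disjoint_compl_right_iff_subset, hFV]
    exact Set.iInter_subset V n
  have hg : ∀ n : ℕ, ∃ g : C(K, ℝ), Set.EqOn g 0 F ∧ Set.EqOn g 1 (V n)ᶜ ∧
      ∀ x, g x ∈ Set.Icc (0:ℝ) 1 := fun n =>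
    exists_continuous_zero_one_of_isClosed hF (hVopen n).isClosed_compl (hdisj n)
  choose g hg0 hg1 hg01 using hg
  have hsum : Summable (fun n : ℕ => (1/2 : ℝ)^(n+1)) := by
    simpa [pow_succ, mul_comm] using (summable_geometric_two).mul_right (1/2 : ℝ)
  have hbound : ∀ (n : ℕ) (x : K), ‖(1/2:ℝ)^(n+1) * g n x‖ ≤ (1/2:ℝ)^(n+1) := by
    intro n x
    rw [norm_mul, norm_pow]
    have h01 := hg01 n x
    have : ‖g n x‖ ≤ 1 := by
      rw [Real.norm_eq_abs, abs_le]; exact ⟨by linarith [h01.1], h01.2⟩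
    calc ‖(1/2:ℝ)‖^(n+1) * ‖g n x‖ ≤ ‖(1/2:ℝ)‖^(n+1) * 1 := by
          exact mul_le_mul_of_nonneg_left this (by positivity)
      _ = (1/2:ℝ)^(n+1) := by rw [mul_one]; norm_num
  have hcont : Continuous (fun x : K => ∑' n : ℕ, (1/2:ℝ)^(n+1) * g n x) :=
    continuous_tsum (fun n => (continuous_const.mul (g n).continuous)) hsum hbound
  have hsummable : ∀ x : K, Summable (fun n : ℕ => (1/2:ℝ)^(n+1) * g n x) := fun x =>
    Summable.of_norm_bounded hsum (fun n => hbound n x)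
  refine ⟨⟨_, hcont⟩, fun z => ⟨?_, ?_⟩, fun z => ?_⟩
  · exact tsum_nonneg fun n => mul_nonneg (by positivity) (hg01 n z).1
  · have h1 : ∑' n : ℕ, (1/2:ℝ)^(n+1) = 1 := by
      have := tsum_geometric_two' 1
      calc ∑' n : ℕ, (1/2:ℝ)^(n+1) = ∑' n : ℕ, 1/2/2^n := by
            refine tsum_congr fun n => ?_
            rw [pow_succ]
            rw [one_div, inv_pow, div_eq_mul_inv, mul_comm]
        _ = 1 := by simpa using tsum_geometric_two' 1
    calc ∑' n : ℕ, (1/2:ℝ)^(n+1) * g n z ≤ ∑' n : ℕ, (1/2:ℝ)^(n+1) := by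
          refine (hsummable z).tsum_le_tsum (fun n => ?_) hsum
          nth_rewrite 2 [← mul_one ((1/2:ℝ)^(n+1))]
          exact mul_le_mul_of_nonneg_left (hg01 n z).2 (by positivity)
      _ = 1 := h1
  · constructor
    · intro h0
      rw [hFV, Set.mem_iInter]
      intro n
      by_contra hzn
      have h1 : g n z = 1 := hg1 n hzn
      have hterm : (1/2:ℝ)^(n+1) * g n z ≤ 0 := by
        simp only [ContinuousMap.coe_mk] at h0
        have := Summable.le_tsum (hsummable z) n (fun j _ => mul_nonneg (by positivity) (hg01 j z).1)
        rw [h0] at this; exact this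
      rw [h1, mul_one] at hterm
      have : (0:ℝ) < (1/2:ℝ)^(n+1) := by positivity
      linarith
    · intro hz
      have : ∀ n : ℕ, (1/2:ℝ)^(n+1) * g n z = 0 := fun n => by
        rw [hg0 n hz]; simp
      simp only [ContinuousMap.coe_mk]
      rw [tsum_congr this, tsum_zero]

/-- Zorn: a maximal pair of disjoint open sets around `A`, `B`; every point
outside the pair is in the closure of both. -/
lemma exists_maximal_pair (A B : Set K) (hA : IsClosed A) (hB : IsClosed B)
    (hAB : Disjoint A B) :
    ∃ G H : Set K, IsOpen G ∧ IsOpen H ∧ Disjoint G H ∧ A ⊆ G ∧ B ⊆ H ∧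
      ∀ z, z ∉ G → z ∉ H → z ∈ closure G ∧ z ∈ closure H := by
  obtain ⟨U₀, V₀, hU₀, hV₀, hAU₀, hBV₀, hUV₀⟩ := normal_separation hA hB hAB
  set S : Set (Set K × Set K) :=
    {p | IsOpen p.1 ∧ IsOpen p.2 ∧ Disjoint p.1 p.2 ∧ A ⊆ p.1 ∧ B ⊆ p.2} with hS
  have hbase : (U₀, V₀) ∈ S := ⟨hU₀, hV₀, hUV₀, hAU₀, hBV₀⟩
  have hub : ∀ c ⊆ S, IsChain (· ≤ ·) c → ∃ ub ∈ S, ∀ z ∈ c, z ≤ ub := by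
    intro c hcS hchain
    rcases c.eq_empty_or_nonempty with rfl | hcne
    · exact ⟨(U₀, V₀), hbase, by simp⟩
    refine ⟨(⋃ p ∈ c, p.1, ⋃ p ∈ c, p.2), ⟨?_, ?_, ?_, ?_, ?_⟩, ?_⟩
    · exact isOpen_biUnion fun p hp => (hcS hp).1
    · exact isOpen_biUnion fun p hp => (hcS hp).2.1
    · rw [Set.disjoint_left]
      rintro x hx1 hx2
      simp only [Set.mem_iUnion] at hx1 hx2
      obtain ⟨p, hp, hxp⟩ := hx1
      obtain ⟨q, hq, hxq⟩ := hx2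
      rcases eq_or_ne p q with rfl | hpq
      · exact (hcS hp).2.2.1.ne_of_mem hxp hxq rfl
      rcases hchain hp hq hpq with h | h
      · exact (hcS hq).2.2.1.ne_of_mem (h.1 hxp) hxq rfl
      · exact (hcS hp).2.2.1.ne_of_mem hxp (h.2 hxq) rfl
    · obtain ⟨p, hp⟩ := hcne
      exact (hcS hp).2.2.2.1.trans (Set.subset_biUnion_of_mem (u := fun p : Set K × Set K => p.1) hp)
    · obtain ⟨p, hp⟩ := hcne
      exact (hcS hp).2.2.2.2.trans (Set.subset_biUnion_of_mem (u := fun p : Set K × Set K => p.2) hp)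
    · intro p hp
      exact ⟨Set.subset_biUnion_of_mem (u := fun p : Set K × Set K => p.1) hp,
        Set.subset_biUnion_of_mem (u := fun p : Set K × Set K => p.2) hp⟩
  obtain ⟨m, hmS, hmax⟩ := zorn_le₀ S hub
  refine ⟨m.1, m.2, hmS.1, hmS.2.1, hmS.2.2.1, hmS.2.2.2.1, hmS.2.2.2.2, ?_⟩
  intro z hzG hzH
  constructor
  · by_contra hcl
    have hN : IsOpen (closure m.1)ᶜ := isClosed_closure.isOpen_compl
    have hmem : (m.1, m.2 ∪ (closure m.1)ᶜ) ∈ S := by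
      refine ⟨hmS.1, hmS.2.1.union hN, ?_, hmS.2.2.2.1, hmS.2.2.2.2.trans subset_union_left⟩
      refine Disjoint.union_right hmS.2.2.1 ?_
      exact Disjoint.mono_left subset_closure (disjoint_compl_right.symm).symm
    have hle : m ≤ (m.1, m.2 ∪ (closure m.1)ᶜ) := ⟨le_refl _, subset_union_left⟩
    have := hmax hmem hle
    have hz2 : z ∈ m.2 ∪ (closure m.1)ᶜ := Or.inr hcl
    exact hzH (this.2 hz2)
  · by_contra hcl
    have hN : IsOpen (closure m.2)ᶜ := isClosed_closure.isOpen_compl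
    have hmem : (m.1 ∪ (closure m.2)ᶜ, m.2) ∈ S := by
      refine ⟨hmS.1.union hN, hmS.2.1, ?_, hmS.2.2.2.1.trans subset_union_left,
        hmS.2.2.2.2⟩
      refine Disjoint.union_left hmS.2.2.1 ?_
      exact Disjoint.mono_right subset_closure disjoint_compl_left
    have hle : m ≤ (m.1 ∪ (closure m.2)ᶜ, m.2) := ⟨subset_union_left, le_refl _⟩
    have := hmax hmem hle
    have hz1 : z ∈ m.1 ∪ (closure m.2)ᶜ := Or.inr hcl
    exact hzG (this.1 hz1)

lemma exists_signChanging (hpn : ∀ F : Set K, IsClosed F → IsGδ F)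
    (A B : Set K) (hA : IsClosed A) (hB : IsClosed B) (hAB : Disjoint A B)
    (hAne : A.Nonempty) :
    ∃ f : C(K, ℝ), ‖f‖ = 1 ∧ LocallySignChanging f ∧
      (∀ z ∈ A, f z = 1) ∧ (∀ z ∈ B, f z = -1) := by
  obtain ⟨G, H, hG, hH, hGH, hAG, hBH, hmax⟩ := exists_maximal_pair A B hA hB hAB
  obtain ⟨u₁, hu₁01, hu₁0⟩ := exists_exact_zero hpn Gᶜ hG.isClosed_compl
  obtain ⟨w₁, hw₁01, hw₁0⟩ := exists_exact_zero hpn Hᶜ hH.isClosed_compl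
  obtain ⟨v₁, hv₁0, hv₁1, hv₁01⟩ := exists_continuous_zero_one_of_isClosed
    hG.isClosed_compl hA (by rw [Set.disjoint_compl_left_iff_subset]; exact hAG)
  obtain ⟨v₂, hv₂0, hv₂1, hv₂01⟩ := exists_continuous_zero_one_of_isClosed
    hH.isClosed_compl hB (by rw [Set.disjoint_compl_left_iff_subset]; exact hBH)
  set u : C(K, ℝ) := u₁ ⊔ v₁ with hu
  set w : C(K, ℝ) := w₁ ⊔ v₂ with hw
  have hu_apply : ∀ z, u z = max (u₁ z) (v₁ z) := fun z => rfl
  have hw_apply : ∀ z, w z = max (w₁ z) (v₂ z) := fun z => rfl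
  have hu01 : ∀ z, u z ∈ Set.Icc (0:ℝ) 1 := fun z => by
    rw [hu_apply]
    exact ⟨le_max_of_le_left (hu₁01 z).1, max_le (hu₁01 z).2 (hv₁01 z).2⟩
  have hw01 : ∀ z, w z ∈ Set.Icc (0:ℝ) 1 := fun z => by
    rw [hw_apply]
    exact ⟨le_max_of_le_left (hw₁01 z).1, max_le (hw₁01 z).2 (hv₂01 z).2⟩
  have hupos : ∀ z, 0 < u z ↔ z ∈ G := by
    intro z
    constructor
    · intro h
      by_contra hzG
      have h1 : u₁ z = 0 := (hu₁0 z).2 hzG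
      have h2 : v₁ z = 0 := hv₁0 hzG
      rw [hu_apply, h1, h2] at h; simp at h
    · intro hzG
      have h1 : u₁ z ≠ 0 := fun h0 => ((hu₁0 z).1 h0) hzG
      have h1' : 0 < u₁ z := lt_of_le_of_ne (hu₁01 z).1 (Ne.symm h1)
      exact lt_of_lt_of_le h1' (le_max_left _ _)
  have hwpos : ∀ z, 0 < w z ↔ z ∈ H := by
    intro z
    constructor
    · intro h
      by_contra hzH
      have h1 : w₁ z = 0 := (hw₁0 z).2 hzH
      have h2 : v₂ z = 0 := hv₂0 hzH
      rw [hw_apply, h1, h2] at h; simp at h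
    · intro hzH
      have h1 : w₁ z ≠ 0 := fun h0 => ((hw₁0 z).1 h0) hzH
      exact lt_of_lt_of_le (lt_of_le_of_ne (hw₁01 z).1 (Ne.symm h1)) (le_max_left _ _)
  set f : C(K, ℝ) := u - w with hf
  have hf_apply : ∀ z, f z = u z - w z := fun z => rfl
  have huz : ∀ z, z ∉ G → u z = 0 := fun z hz => by
    rw [hu_apply, (hu₁0 z).2 hz, hv₁0 hz]; simp
  have hwz : ∀ z, z ∉ H → w z = 0 := fun z hz => by
    rw [hw_apply, (hw₁0 z).2 hz, hv₂0 hz]; simp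
  have hfA : ∀ z ∈ A, f z = 1 := by
    intro z hz
    have hzG : z ∈ G := hAG hz
    have hzH : z ∉ H := fun h => hGH.ne_of_mem hzG h rfl
    have hv1 : v₁ z = 1 := by simpa using hv₁1 hz
    have h1 : u z = 1 := le_antisymm (hu01 z).2 (by
      rw [hu_apply]; exact le_max_of_le_right (le_of_eq hv1.symm))
    rw [hf_apply, h1, hwz z hzH]; ring
  have hfB : ∀ z ∈ B, f z = -1 := by
    intro z hz
    have hzH : z ∈ H := hBH hz
    have hzG : z ∉ G := fun h => hGH.ne_of_mem h hzH rfl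
    have hv2 : v₂ z = 1 := by simpa using hv₂1 hz
    have h1 : w z = 1 := le_antisymm (hw01 z).2 (by
      rw [hw_apply]; exact le_max_of_le_right (le_of_eq hv2.symm))
    rw [hf_apply, h1, huz z hzG]; ring
  have hbound : ∀ z, |f z| ≤ 1 := by
    intro z
    rw [hf_apply, abs_le]
    constructor
    · have := (hw01 z).2; have := (hu01 z).1; linarith
    · have := (hu01 z).2; have := (hw01 z).1; linarith
  have hfpos : ∀ z, z ∈ G → 0 < f z := by
    intro z hz
    have hzH : z ∉ H := fun h => hGH.ne_of_mem hz h rfl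
    rw [hf_apply, hwz z hzH, sub_zero]
    exact (hupos z).2 hz
  have hfneg : ∀ z, z ∈ H → f z < 0 := by
    intro z hz
    have hzG : z ∉ G := fun h => hGH.ne_of_mem h hz rfl
    rw [hf_apply, huz z hzG]
    simp only [zero_sub, neg_neg, neg_lt_zero]
    exact (hwpos z).2 hz
  obtain ⟨a, ha⟩ := hAne
  refine ⟨f, ?_, ?_, hfA, hfB⟩
  · refine le_antisymm ?_ ?_
    · rw [ContinuousMap.norm_le _ zero_le_one]
      intro x
      rw [Real.norm_eq_abs]; exact hbound x
    · calc (1:ℝ) = |f a| := by rw [hfA a ha]; norm_num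
        _ = ‖f a‖ := rfl
        _ ≤ ‖f‖ := ContinuousMap.norm_coe_le_norm f a
  · intro z _ hfz U hU hzU
    have hzG : z ∉ G := fun h => by have := hfpos z h; rw [hfz] at this; exact lt_irrefl _ this
    have hzH : z ∉ H := fun h => by have := hfneg z h; rw [hfz] at this; exact lt_irrefl _ this
    obtain ⟨hclG, hclH⟩ := hmax z hzG hzH
    constructor
    · obtain ⟨t, htU, htG⟩ := (_root_.mem_closure_iff.1 hclG) U hU hzU
      exact ⟨t, htU, hfpos t htG⟩
    · obtain ⟨t, htU, htH⟩ := (_root_.mem_closure_iff.1 hclH) U hU hzU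
      exact ⟨t, htU, hfneg t htH⟩

lemma aleph0_le_densityCharacter [Nonempty K] : ℵ₀ ≤ densityCharacter C(K, ℝ) := by
  have hinf : Infinite C(K, ℝ) := by
    refine Infinite.of_injective (fun r : ℝ => (ContinuousMap.const K r)) ?_
    intro a b hab
    have := ContinuousMap.congr_fun hab (Classical.arbitrary K)
    simpa using this
  refine le_csInf ⟨#(Set.univ : Set C(K,ℝ)), Set.univ, dense_univ, rfl⟩ ?_
  rintro c ⟨s, hs, rfl⟩
  by_contra hlt
  push_neg at hlt
  rw [lt_aleph0_iff_set_finite] at hlt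
  have hclosed : IsClosed s := hlt.isClosed
  have : s = Set.univ := by
    have := hs.closure_eq
    rw [hclosed.closure_eq] at this
    exact this
  rw [this] at hlt
  exact Set.infinite_univ hlt

lemma countable_isolated (hpn : ∀ F : Set K, IsClosed F → IsGδ F) :
    {z : K | IsOpen ({z} : Set K)}.Countable := by
  set D := {z : K | IsOpen ({z} : Set K)} with hD
  have hDopen : IsOpen D := by
    have : D = ⋃ z ∈ D, ({z} : Set K) := by
      ext x; simp [hD]
    rw [this]
    exact isOpen_biUnion fun z hz => hz
  obtain ⟨T, hTopen, hTc, hTD⟩ := hpn Dᶜ hDopen.isClosed_compl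
  have hDeq : D = ⋃ t ∈ T, tᶜ := by
    have : Dᶜ = ⋂₀ T := hTD
    rw [← compl_compl D, this, Set.compl_sInter]
    ext x; simp
  rw [hDeq]
  refine Set.Countable.biUnion hTc ?_
  intro t ht
  have htcl : IsClosed tᶜ := (hTopen t ht).isClosed_compl
  have htcp : IsCompact tᶜ := htcl.isCompact
  have hsub : tᶜ ⊆ D := by
    rw [hDeq]; exact Set.subset_biUnion_of_mem (u := fun t : Set K => tᶜ) ht
  -- compact set covered by open singletons is finite
  have hcover : tᶜ ⊆ ⋃ z : D, ({z.1} : Set K) := by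
    intro x hx
    exact Set.mem_iUnion.2 ⟨⟨x, hsub hx⟩, rfl⟩
  obtain ⟨F, hF⟩ := htcp.elim_finite_subcover (fun z : D => ({z.1} : Set K))
    (fun z => z.2) hcover
  have : tᶜ ⊆ (fun z : D => z.1) '' (F : Set D) := by
    intro x hx
    obtain ⟨z, hz, hxz⟩ := Set.mem_iUnion₂.1 (hF hx)
    exact ⟨z, hz, by simpa using hxz.symm⟩
  exact (Set.Finite.image _ F.finite_toSet).subset this |>.countable

lemma exists_unseparated_pair (hd : ℵ₀ < densityCharacter C(K, ℝ))
    (S : Set C(K, ℝ)) (hS : #S < densityCharacter C(K, ℝ)) :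
    ∃ x y : K, x ≠ y ∧ ∀ g ∈ S, g x = g y := by
  by_contra hcon
  push_neg at hcon
  -- the ℝ-subalgebra generated by S separates points, so it is dense (SW)
  have hsep : (Algebra.adjoin ℝ S).SeparatesPoints := by
    intro x y hxy
    obtain ⟨g, hgS, hgxy⟩ := hcon x y hxy
    exact ⟨(g : K → ℝ), ⟨g, Algebra.subset_adjoin hgS, rfl⟩, hgxy⟩
  have htop : (Algebra.adjoin ℝ S).topologicalClosure = ⊤ :=
    ContinuousMap.subalgebra_topologicalClosure_eq_top_of_separatesPoints _ hsep
  -- the ℚ-subalgebra generated by S is dense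
  set Q : Set C(K, ℝ) := ((Algebra.adjoin ℚ S : Subalgebra ℚ C(K, ℝ)) : Set C(K, ℝ)) with hQ
  have hQdense : Dense Q := by
    -- closure of Q is an ℝ-subalgebra
    have hRc : ∀ (r : ℝ), (algebraMap ℝ C(K, ℝ)) r ∈ closure Q := by
      intro r
      have hcontmap : Continuous (fun t : ℝ => (algebraMap ℝ C(K, ℝ)) t) := by
        have : (fun t : ℝ => (algebraMap ℝ C(K, ℝ)) t) =
            (fun t : ℝ => t • (1 : C(K, ℝ))) := by
          funext t; simp [Algebra.algebraMap_eq_smul_one]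
        rw [this]
        exact (continuous_id.smul continuous_const)
      have hr : r ∈ closure (Set.range ((↑) : ℚ → ℝ)) := by
        rw [Rat.denseRange_cast.closure_eq]; trivial
      have himg : (fun t : ℝ => (algebraMap ℝ C(K, ℝ)) t) '' closure (Set.range ((↑) : ℚ → ℝ))
          ⊆ closure ((fun t : ℝ => (algebraMap ℝ C(K, ℝ)) t) '' Set.range ((↑) : ℚ → ℝ)) :=
        image_closure_subset_closure_image hcontmap
      have hQ' : (fun t : ℝ => (algebraMap ℝ C(K, ℝ)) t) '' Set.range ((↑) : ℚ → ℝ) ⊆ Q := by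
        rintro _ ⟨_, ⟨q, rfl⟩, rfl⟩
        have h0 : ((algebraMap ℚ ℝ) q : ℝ) = (q : ℝ) := eq_ratCast (algebraMap ℚ ℝ) q
        have : (algebraMap ℝ C(K, ℝ)) (q : ℝ) = (algebraMap ℚ C(K, ℝ)) q := by
          rw [IsScalarTower.algebraMap_apply ℚ ℝ C(K, ℝ), h0]
        show (algebraMap ℝ C(K, ℝ)) (q : ℝ) ∈ Q
        rw [this]
        exact (Algebra.adjoin ℚ S).algebraMap_mem q
      exact closure_mono hQ' (himg ⟨r, hr, rfl⟩)
    -- build the ℝ-subalgebra with carrier `closure Q`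
    set Rc : Subring C(K, ℝ) := ((Algebra.adjoin ℚ S).toSubring).topologicalClosure with hRcdef
    have hRcQ : (Rc : Set C(K, ℝ)) = closure Q := rfl
    set Calg : Subalgebra ℝ C(K, ℝ) :=
      { carrier := closure Q
        mul_mem' := fun ha hb => Rc.mul_mem ha hb
        one_mem' := Rc.one_mem
        add_mem' := fun ha hb => Rc.add_mem ha hb
        zero_mem' := Rc.zero_mem
        algebraMap_mem' := hRc } with hCalg
    have hle : Algebra.adjoin ℝ S ≤ Calg :=
      Algebra.adjoin_le (fun g hg => subset_closure ((Algebra.subset_adjoin hg : g ∈ _)))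
    have hclosed : IsClosed (Calg : Set C(K, ℝ)) := isClosed_closure
    have := Subalgebra.topologicalClosure_minimal hle hclosed
    rw [htop] at this
    have huniv : (Calg : Set C(K, ℝ)) = Set.univ := by
      apply Set.eq_univ_of_univ_subset
      intro g _
      exact this (by trivial : g ∈ (⊤ : Subalgebra ℝ C(K, ℝ)))
    rw [dense_iff_closure_eq]
    apply Set.eq_univ_of_univ_subset
    rw [← huniv]
    exact fun x hx => hx
  -- cardinality of Q
  have hQcard : #Q < densityCharacter C(K, ℝ) := by
    have h1 : Algebra.adjoin ℚ S = (MvPolynomial.aeval ((↑) : S → C(K, ℝ))).range := by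
      have := Algebra.adjoin_range_eq_range_aeval ℚ ((↑) : S → C(K, ℝ))
      rwa [Subtype.range_coe] at this
    have h2 : #Q ≤ #(MvPolynomial S ℚ) := by
      rw [hQ, h1]
      exact Cardinal.mk_le_of_surjective
        (f := fun p : MvPolynomial S ℚ =>
          (⟨MvPolynomial.aeval ((↑) : S → C(K, ℝ)) p, ⟨p, rfl⟩⟩ :
            ((MvPolynomial.aeval ((↑) : S → C(K, ℝ))).range : Set C(K, ℝ))))
        (by rintro ⟨g, p, rfl⟩; exact ⟨p, rfl⟩)
    have h3 : #(MvPolynomial S ℚ) ≤ max (max (Cardinal.lift.{_} #ℚ) (Cardinal.lift.{0} #S)) ℵ₀ :=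
      MvPolynomial.cardinalMk_le_max_lift
    have h4 : #(MvPolynomial S ℚ) ≤ max #S ℵ₀ := by
      refine h3.trans ?_
      simp only [Cardinal.mkRat, Cardinal.lift_aleph0, Cardinal.lift_id]
      rw [max_comm (ℵ₀ : Cardinal) _]
      rw [max_assoc]
      simp [max_comm]
    refine lt_of_le_of_lt (h2.trans h4) ?_
    exact max_lt hS hd
  have := densityCharacter_le Q hQdense
  exact absurd (this.trans_lt hQcard) (lt_irrefl _)

/-- The continuous indicator function of an isolated point. -/
noncomputable def isoChi (p : K) (hp : IsOpen ({p} : Set K)) : C(K, ℝ) := by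
  classical
  refine ⟨fun t => if t = p then (1:ℝ) else 0, ?_⟩
  have hfr : frontier {t : K | t = p} = ∅ := by
    have hcl : IsClosed ({p} : Set K) := isClosed_singleton
    have : frontier ({p} : Set K) = ∅ := by
      rw [frontier, hcl.closure_eq, hp.interior_eq, Set.diff_self]
    rw [Set.setOf_eq_eq_singleton]
    exact this
  exact continuous_if (fun a ha => absurd ha (by rw [hfr]; exact Set.notMem_empty a))
    continuousOn_const continuousOn_const

lemma exists_next (hpn : ∀ F : Set K, IsClosed F → IsGδ F)
    (hd : ℵ₀ < densityCharacter C(K, ℝ))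
    (T : Set C(K, ℝ)) (hT : #T < densityCharacter C(K, ℝ)) :
    ∃ f : C(K, ℝ), ‖f‖ = 1 ∧ LocallySignChanging f ∧
      ∀ g ∈ T, LocallySignChanging g → 1 < ‖f - g‖ := by
  classical
  set D := {z : K | IsOpen ({z} : Set K)} with hDdef
  set X : Set C(K, ℝ) := T ∪ (⋃ p : D, {isoChi p.1 p.2}) with hX
  have hXcard : #X < densityCharacter C(K, ℝ) := by
    have h1 : (⋃ p : D, {isoChi p.1 p.2} : Set C(K,ℝ)).Countable := by
      haveI : Countable D := (countable_isolated hpn).to_subtype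
      exact Set.countable_iUnion fun p => Set.countable_singleton _
    refine lt_of_le_of_lt (Cardinal.mk_union_le _ _) ?_
    exact Cardinal.add_lt_of_lt hd.le hT (lt_of_le_of_lt h1.le_aleph0 hd)
  obtain ⟨x, y, hxy, hunsep⟩ := exists_unseparated_pair hd X hXcard
  -- x and y are not isolated
  have hxD : x ∉ D := by
    intro hxD
    have hchi : isoChi x hxD ∈ X := by
      refine Set.mem_union_right _ ?_
      exact Set.mem_iUnion.2 ⟨⟨x, hxD⟩, rfl⟩
    have := hunsep _ hchi
    simp only [isoChi, ContinuousMap.coe_mk, if_pos rfl] at this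
    rw [if_neg (Ne.symm hxy)] at this
    norm_num at this
  have hyD : y ∉ D := by
    intro hyD
    have hchi : isoChi y hyD ∈ X := by
      refine Set.mem_union_right _ ?_
      exact Set.mem_iUnion.2 ⟨⟨y, hyD⟩, rfl⟩
    have := hunsep _ hchi
    simp only [isoChi, ContinuousMap.coe_mk, if_pos rfl] at this
    rw [if_neg hxy] at this
    norm_num at this
  -- closed neighbourhoods
  obtain ⟨u, hu0, hu1, hu01⟩ := exists_continuous_zero_one_of_isClosed
    (isClosed_singleton (x := x)) (isClosed_singleton (x := y))
    (by simpa [Set.disjoint_singleton] using hxy)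
  set V : Set K := u ⁻¹' (Set.Iio (1/3 : ℝ)) with hV
  set A : Set K := u ⁻¹' (Set.Iic (1/3 : ℝ)) with hA
  set B : Set K := u ⁻¹' (Set.Ici (2/3 : ℝ)) with hB
  have hVopen : IsOpen V := u.continuous.isOpen_preimage _ isOpen_Iio
  have hAclosed : IsClosed A := IsClosed.preimage u.continuous isClosed_Iic
  have hBclosed : IsClosed B := IsClosed.preimage u.continuous isClosed_Ici
  have hxV : x ∈ V := by
    have h0 : u x = 0 := hu0 rfl
    show u x < 1/3
    rw [h0]; norm_num
  have hVA : V ⊆ A := fun t ht => show u t ≤ 1/3 from le_of_lt ht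
  have hyB : y ∈ B := by
    have h1 : u y = 1 := by simpa using hu1 rfl
    show (2/3:ℝ) ≤ u y
    rw [h1]; norm_num
  have hABdisj : Disjoint A B := by
    rw [Set.disjoint_left]
    intro t htA htB
    have h1 : u t ≤ 1/3 := htA
    have h2 : (2/3 : ℝ) ≤ u t := htB
    linarith
  obtain ⟨f, hfnorm, hfsgn, hfA, hfB⟩ :=
    exists_signChanging hpn A B hAclosed hBclosed hABdisj ⟨x, hVA hxV⟩
  refine ⟨f, hfnorm, hfsgn, ?_⟩
  intro g hgT hgsgn
  have hgX : g ∈ X := Set.mem_union_left _ hgT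
  have hc : g x = g y := hunsep g hgX
  have hnorm_ge : ∀ t : K, |f t - g t| ≤ ‖f - g‖ := by
    intro t
    have := ContinuousMap.norm_coe_le_norm (f - g) t
    simpa [Real.norm_eq_abs] using this
  rcases lt_trichotomy (g x) 0 with hneg | hzero | hpos
  · have hfx : f x = 1 := hfA x (hVA hxV)
    have : (1:ℝ) < |f x - g x| := by
      rw [hfx]; rw [abs_of_pos (by linarith)]; linarith
    exact lt_of_lt_of_le this (hnorm_ge x)
  · -- common value 0: use sign changing of g near x
    have hxnotiso : ¬ IsOpen ({x} : Set K) := hxD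
    obtain ⟨_, ⟨t, htV, htneg⟩⟩ := hgsgn x hxnotiso hzero V hVopen hxV
    have hft : f t = 1 := hfA t (hVA htV)
    have : (1:ℝ) < |f t - g t| := by
      rw [hft, abs_of_pos (by linarith)]; linarith
    exact lt_of_lt_of_le this (hnorm_ge t)
  · have hfy : f y = -1 := hfB y hyB
    have hgy : 0 < g y := by rw [← hc]; exact hpos
    have : (1:ℝ) < |f y - g y| := by
      rw [hfy, abs_of_neg (by linarith)]; linarith
    exact lt_of_lt_of_le this (hnorm_ge y)

lemma exists_big_family (hpn : ∀ F : Set K, IsClosed F → IsGδ F)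
    (hd : ℵ₀ < densityCharacter C(K, ℝ)) :
    ∃ A : Set C(K, ℝ), #A = densityCharacter C(K, ℝ) ∧ (∀ f ∈ A, ‖f‖ = 1) ∧
      (∀ f ∈ A, ∀ g ∈ A, f ≠ g → 1 < ‖f - g‖) ∧ ∀ f ∈ A, LocallySignChanging f := by
  classical
  set d := densityCharacter C(K, ℝ) with hddef
  set ι := d.ord.ToType with hι
  have wf : WellFounded ((· < ·) : ι → ι → Prop) := (wellFoundedLT_toType d.ord).wf
  -- the recursive construction
  set body : ∀ x : ι, (∀ y : ι, y < x → C(K, ℝ)) → C(K, ℝ) := fun x rec =>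
    Classical.choose (exists_next hpn hd
      (Set.range (fun p : Set.Iio x => rec p.1 p.2))
      (lt_of_le_of_lt Cardinal.mk_range_le (Cardinal.mk_Iio_ord_toType x))) with hbody
  set F : ι → C(K, ℝ) := wf.fix body with hF
  have hFeq : ∀ x : ι, F x = body x (fun y _ => F y) := fun x => wf.fix_eq body x
  have hFspec : ∀ x : ι, ‖F x‖ = 1 ∧ LocallySignChanging (F x) ∧
      ∀ g ∈ Set.range (fun p : Set.Iio x => F p.1), LocallySignChanging g → 1 < ‖F x - g‖ := by
    intro x
    have := Classical.choose_spec (exists_next hpn hd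
      (Set.range (fun p : Set.Iio x => F p.1))
      (lt_of_le_of_lt Cardinal.mk_range_le (Cardinal.mk_Iio_ord_toType x)))
    rw [hFeq x]
    exact this
  have hsep : ∀ x y : ι, y < x → 1 < ‖F x - F y‖ := by
    intro x y hyx
    exact (hFspec x).2.2 (F y) ⟨⟨y, hyx⟩, rfl⟩ (hFspec y).2.1
  have hinj : Function.Injective F := by
    intro a b hab
    by_contra hne
    rcases lt_or_gt_of_ne hne with h | h
    · have := hsep b a h; rw [hab] at this; simp at this; linarith
    · have := hsep a b h; rw [hab] at this; simp at this; linarith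
  refine ⟨Set.range F, ?_, ?_, ?_, ?_⟩
  · rw [Cardinal.mk_range_eq F hinj]
    rw [hι, Cardinal.mk_ord_toType]
  · rintro f ⟨x, rfl⟩; exact (hFspec x).1
  · rintro f ⟨x, rfl⟩ g ⟨y, rfl⟩ hfg
    rcases lt_trichotomy x y with h | h | h
    · rw [norm_sub_rev]; exact hsep y x h
    · exact absurd (congrArg F h) hfg
    · exact hsep x y h
  · rintro f ⟨x, rfl⟩; exact (hFspec x).2.1

lemma exists_countable_family [Infinite K] (hpn : ∀ F : Set K, IsClosed F → IsGδ F) :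
    ∃ A : Set C(K, ℝ), #A = ℵ₀ ∧ (∀ f ∈ A, ‖f‖ = 1) ∧
      (∀ f ∈ A, ∀ g ∈ A, f ≠ g → 1 < ‖f - g‖) ∧ ∀ f ∈ A, LocallySignChanging f := by
  classical
  -- an accumulation point whose every neighbourhood is infinite
  obtain ⟨z, hz⟩ : ∃ z : K, ClusterPt z (Filter.cofinite) := by
    obtain ⟨z, _, hz⟩ := isCompact_univ.exists_clusterPt
      (Filter.le_principal_iff.2 (Filter.univ_mem (f := (Filter.cofinite : Filter K))))
    exact ⟨z, hz⟩
  have hinfnhd : ∀ O : Set K, IsOpen O → z ∈ O → O.Infinite := by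
    intro O hO hzO
    by_contra hfin
    rw [Set.not_infinite] at hfin
    have h1 : O ∈ nhds z := hO.mem_nhds hzO
    have h2 : Oᶜ ∈ (Filter.cofinite : Filter K) := by
      rw [Filter.mem_cofinite, compl_compl]; exact hfin
    have := hz.neBot
    have h3 : O ∩ Oᶜ ∈ nhds z ⊓ Filter.cofinite :=
      Filter.inter_mem_inf h1 h2
    rw [Set.inter_compl_self] at h3
    exact (Filter.empty_notMem _) h3
  -- one refinement step
  have step : ∀ O : Set K, IsOpen O → z ∈ O →
      ∃ (O' U' : Set K), (IsOpen O' ∧ z ∈ O') ∧ (IsOpen U' ∧ U'.Nonempty) ∧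
        O' ⊆ O ∧ U' ⊆ O ∧ Disjoint (closure U') (closure O') := by
    intro O hO hzO
    obtain ⟨x, hxO, hxz⟩ : ∃ x, x ∈ O ∧ x ≠ z := by
      have := hinfnhd O hO hzO
      obtain ⟨x, hx, hxne⟩ := (this.diff (Set.finite_singleton z)).nonempty
      exact ⟨x, hx, by simpa using hxne⟩
    obtain ⟨u, hu0, hu1, hu01⟩ := exists_continuous_zero_one_of_isClosed
      (isClosed_singleton (x := x)) (isClosed_singleton (x := z))
      (by simpa [Set.disjoint_singleton] using hxz)
    refine ⟨O ∩ u ⁻¹' (Set.Ioi (2/3 : ℝ)), O ∩ u ⁻¹' (Set.Iio (1/3 : ℝ)),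
      ⟨hO.inter (u.continuous.isOpen_preimage _ isOpen_Ioi), ⟨hzO, ?_⟩⟩,
      ⟨hO.inter (u.continuous.isOpen_preimage _ isOpen_Iio), ⟨x, hxO, ?_⟩⟩,
      Set.inter_subset_left, Set.inter_subset_left, ?_⟩
    · show u z ∈ Set.Ioi (2/3:ℝ)
      have : u z = 1 := by simpa using hu1 rfl
      rw [Set.mem_Ioi, this]; norm_num
    · show u x ∈ Set.Iio (1/3:ℝ)
      have : u x = 0 := hu0 rfl
      rw [Set.mem_Iio, this]; norm_num
    · have hsub1 : closure (O ∩ u ⁻¹' (Set.Iio (1/3 : ℝ))) ⊆ u ⁻¹' (Set.Iic (1/3 : ℝ)) := by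
        apply closure_minimal
        · exact fun t ht => show u t ≤ 1/3 from le_of_lt ht.2
        · exact IsClosed.preimage u.continuous isClosed_Iic
      have hsub2 : closure (O ∩ u ⁻¹' (Set.Ioi (2/3 : ℝ))) ⊆ u ⁻¹' (Set.Ici (2/3 : ℝ)) := by
        apply closure_minimal
        · exact fun t ht => show (2/3:ℝ) ≤ u t from le_of_lt ht.2
        · exact IsClosed.preimage u.continuous isClosed_Ici
      refine Set.disjoint_left.2 fun t ht1 ht2 => ?_
      have h1 : u t ≤ 1/3 := hsub1 ht1
      have h2 : (2/3:ℝ) ≤ u t := hsub2 ht2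
      linarith
  -- iterate
  choose stepO stepU hstep using step
  set St : ℕ → {p : Set K × Set K // (IsOpen p.1 ∧ z ∈ p.1) ∧ (IsOpen p.2 ∧ p.2.Nonempty) ∧
      Disjoint (closure p.2) (closure p.1)} :=
    fun n => Nat.rec
      ⟨(stepO Set.univ isOpen_univ trivial, stepU Set.univ isOpen_univ trivial),
        (hstep Set.univ isOpen_univ trivial).1, (hstep Set.univ isOpen_univ trivial).2.1,
        (hstep Set.univ isOpen_univ trivial).2.2.2.2⟩
      (fun _ prev =>
        ⟨(stepO prev.1.1 prev.2.1.1 prev.2.1.2, stepU prev.1.1 prev.2.1.1 prev.2.1.2),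
          (hstep prev.1.1 prev.2.1.1 prev.2.1.2).1,
          (hstep prev.1.1 prev.2.1.1 prev.2.1.2).2.1,
          (hstep prev.1.1 prev.2.1.1 prev.2.1.2).2.2.2.2⟩) n
    with hSt
  set O : ℕ → Set K := fun n => (St n).1.1 with hO
  set U : ℕ → Set K := fun n => (St n).1.2 with hU
  have hOopen : ∀ n, IsOpen (O n) := fun n => (St n).2.1.1
  have hzO : ∀ n, z ∈ O n := fun n => (St n).2.1.2
  have hUopen : ∀ n, IsOpen (U n) := fun n => (St n).2.2.1.1
  have hUne : ∀ n, (U n).Nonempty := fun n => (St n).2.2.1.2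
  have hUOdisj : ∀ n, Disjoint (closure (U n)) (closure (O n)) := fun n => (St n).2.2.2
  have hOsub : ∀ n, O (n+1) ⊆ O n := fun n =>
    (hstep (O n) (hOopen n) (hzO n)).2.2.1
  have hUsub : ∀ n, U (n+1) ⊆ O n := fun n =>
    (hstep (O n) (hOopen n) (hzO n)).2.2.2.1
  have hOmono : ∀ n m, n ≤ m → O m ⊆ O n := by
    intro n m hnm
    induction m with
    | zero => rw [Nat.le_zero.1 hnm]
    | succ k ih =>
      rcases Nat.lt_or_ge n (k+1) with h | h
      · exact (hOsub k).trans (ih (Nat.lt_succ_iff.1 h))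
      · have : n = k + 1 := le_antisymm hnm h
        rw [this]
  have hUO : ∀ n m, n < m → U m ⊆ O n := by
    intro n m hnm
    rcases Nat.exists_eq_add_of_lt hnm with ⟨k, rfl⟩
    exact (hUsub (n + k)).trans (hOmono n (n+k) (Nat.le_add_right n k))
  have hdisjU : ∀ n m, n < m → Disjoint (closure (U n)) (closure (U m)) := by
    intro n m hnm
    have : closure (U m) ⊆ closure (O n) := closure_mono (hUO n m hnm)
    exact (Disjoint.mono_right this (hUOdisj n))
  -- the functions
  have hfn : ∀ n : ℕ, ∃ f : C(K, ℝ), ‖f‖ = 1 ∧ LocallySignChanging f ∧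
      (∀ t ∈ closure (U n), f t = 1) ∧
      (∀ t ∈ ⋃ k ∈ Set.Iio n, closure (U k), f t = -1) := by
    intro n
    have hBclosed : IsClosed (⋃ k ∈ Set.Iio n, closure (U k)) := by
      apply Set.Finite.isClosed_biUnion (Set.finite_Iio n)
      exact fun k _ => isClosed_closure
    have hdisj : Disjoint (closure (U n)) (⋃ k ∈ Set.Iio n, closure (U k)) := by
      rw [Set.disjoint_left]
      intro t ht hmem
      obtain ⟨k, hk, htk⟩ := Set.mem_iUnion₂.1 hmem
      exact ((hdisjU k n hk).symm.ne_of_mem ht htk) rfl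
    exact exists_signChanging hpn (closure (U n)) _ isClosed_closure hBclosed hdisj
      ((hUne n).mono subset_closure)
  choose f hf1 hf2 hf3 hf4 using hfn
  have hsep : ∀ k n, k < n → 1 < ‖f n - f k‖ := by
    intro k n hkn
    obtain ⟨x, hx⟩ := hUne k
    have hx1 : f k x = 1 := hf3 k x (subset_closure hx)
    have hx2 : f n x = -1 := hf4 n x (Set.mem_biUnion hkn (subset_closure hx))
    have : |(f n - f k :) x| ≤ ‖f n - f k‖ := by
      have := ContinuousMap.norm_coe_le_norm (f n - f k) x
      simpa [Real.norm_eq_abs] using this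
    have heval : (f n - f k :) x = -2 := by
      simp [ContinuousMap.sub_apply, hx1, hx2]; ring
    rw [heval] at this
    rw [abs_of_neg (by norm_num : (-2:ℝ) < 0)] at this
    linarith
  have hinj : Function.Injective f := by
    intro a b hab
    by_contra hne
    rcases lt_or_gt_of_ne hne with h | h
    · have := hsep a b h; rw [hab] at this; simp at this; linarith
    · have := hsep b a h; rw [hab] at this; simp at this; linarith
  refine ⟨Set.range f, ?_, ?_, ?_, ?_⟩
  · refine le_antisymm ?_ ?_
    · exact (Set.countable_range f).le_aleph0
    · exact Cardinal.infinite_iff.1 (Set.infinite_coe_iff.2 (Set.infinite_range_of_injective hinj))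
  · rintro g ⟨n, rfl⟩; exact hf1 n
  · rintro g ⟨n, rfl⟩ g' ⟨m, rfl⟩ hgg'
    rcases lt_trichotomy n m with h | h | h
    · rw [norm_sub_rev]; exact hsep n m h
    · exact absurd (congrArg f h) hgg'
    · exact hsep m n h
  · rintro g ⟨n, rfl⟩; exact hf2 n


end Aux

/-- Let `K` be an infinite, perfectly normal, compact Hausdorff space.  Then
the unit sphere of `C(K)` contains a (1+)-separated subset of cardinality
`d(C(K))`; moreover if `K` has no isolated points, such a set can be chosen to
consist of locally sign-changing functions. -/
theorem separated_set_of_density_in_perfectly_normal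
    (K : Type*) [TopologicalSpace K] [CompactSpace K] [T2Space K] [Infinite K]
    (hpn : ∀ F : Set K, IsClosed F → IsGδ F) :
    (∃ A : Set C(K, ℝ), #A = densityCharacter C(K, ℝ) ∧ (∀ f ∈ A, ‖f‖ = 1) ∧
      ∀ f ∈ A, ∀ g ∈ A, f ≠ g → 1 < ‖f - g‖) ∧
    ((∀ z : K, ¬ IsOpen ({z} : Set K)) →
      ∃ A : Set C(K, ℝ), #A = densityCharacter C(K, ℝ) ∧ (∀ f ∈ A, ‖f‖ = 1) ∧
        (∀ f ∈ A, ∀ g ∈ A, f ≠ g → 1 < ‖f - g‖) ∧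
        ∀ f ∈ A, LocallySignChanging f) := by
  classical
  have hd0 : ℵ₀ ≤ densityCharacter C(K, ℝ) := aleph0_le_densityCharacter
  have key : ∃ A : Set C(K, ℝ), #A = densityCharacter C(K, ℝ) ∧ (∀ f ∈ A, ‖f‖ = 1) ∧
      (∀ f ∈ A, ∀ g ∈ A, f ≠ g → 1 < ‖f - g‖) ∧ ∀ f ∈ A, LocallySignChanging f := by
    rcases lt_or_ge ℵ₀ (densityCharacter C(K, ℝ)) with h | h
    · exact exists_big_family hpn h
    · obtain ⟨A, hA, h1, h2, h3⟩ := exists_countable_family hpn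
      exact ⟨A, hA.trans (le_antisymm hd0 h), h1, h2, h3⟩
  obtain ⟨A, h1, h2, h3, h4⟩ := key
  exact ⟨⟨A, h1, h2, h3⟩, fun _ => ⟨A, h1, h2, h3, h4⟩⟩
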